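/- arXiv:math/0607018 — 2 statements merged into one kernel-verified Lean document; each statement's English description precedes it below -/
import Mathlib

section
/- Let ξ and η be even, unimodal probability density functions on ℝ, let n > 0, ν > 0, and define I_i(d) = ∫ x^i √n η(√n(x−d)) ν ξ(νx) dx for i = 0, 1. If I_1(d) is finite, then |I_1(d)/I_0(d)| ≤ |d|. -/
open MeasureTheory

lemma evenAbs (g : ℝ → ℝ) (hge : ∀ x, g (-x) = g x) (x : ℝ) : g |x| = g x := by
  rcases abs_cases x with ⟨h, _⟩ | ⟨h, _⟩
  · rw [h]
  · rw [h, hge]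

lemma evenAntitoneMeasurable (g : ℝ → ℝ) (hge : ∀ x, g (-x) = g x)
    (hgm : AntitoneOn g (Set.Ici 0)) : Measurable g := by
  have h1 : Antitone (fun x => g (max x 0)) := fun a b hab =>
    hgm (Set.mem_Ici.mpr (le_max_right _ _)) (Set.mem_Ici.mpr (le_max_right _ _)) (max_le_max hab le_rfl)
  have h2 : Measurable (fun x => g (max x 0)) := h1.measurable
  have h3 : g = fun x => g (max |x| 0) := by
    funext x
    rw [max_eq_left (abs_nonneg x), evenAbs g hge]
  rw [h3]; exact h2.comp measurable_abs

lemma evenAntitoneLe (g : ℝ → ℝ) (hge : ∀ x, g (-x) = g x)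
    (hgm : AntitoneOn g (Set.Ici 0)) {a b : ℝ} (h : |a| ≤ |b|) : g b ≤ g a := by
  rw [← evenAbs g hge a, ← evenAbs g hge b]
  exact hgm (abs_nonneg a) ((abs_nonneg a).trans h) h

lemma integral_split (φ : ℝ → ℝ) (hφ : Integrable φ) :
    ∫ x, φ x = ∫ x in Set.Ioi (0:ℝ), (φ x + φ (-x)) := by
  rw [integral_add hφ.integrableOn (hφ.comp_neg.integrableOn),
    integral_comp_neg_Ioi, neg_zero]
  rw [add_comm, ← setIntegral_union (Set.Iic_disjoint_Ioi le_rfl) measurableSet_Ioi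
    hφ.integrableOn hφ.integrableOn, Set.Iic_union_Ioi, setIntegral_univ]

lemma fInt (ξ η : ℝ → ℝ)
    (hξ0 : ∀ x, 0 ≤ ξ x) (hη0 : ∀ x, 0 ≤ η x)
    (hξe : ∀ x, ξ (-x) = ξ x) (hηe : ∀ x, η (-x) = η x)
    (hξm : AntitoneOn ξ (Set.Ici 0)) (hηm : AntitoneOn η (Set.Ici 0))
    (hξi : Integrable ξ)
    (c ν : ℝ) (hc : 0 < c) (hν : 0 < ν) (d : ℝ) :
    Integrable (fun x => c * η (c * (x - d)) * (ν * ξ (ν * x))) := by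
  have hξmeas : Measurable ξ := evenAntitoneMeasurable ξ hξe hξm
  have hηmeas : Measurable η := evenAntitoneMeasurable η hηe hηm
  have hmeas : Measurable (fun x => c * η (c * (x - d)) * (ν * ξ (ν * x))) := by
    fun_prop
  have hg : Integrable (fun x : ℝ => c * η 0 * (ν * ξ (ν * x))) := by
    have h0 : Integrable (fun x : ℝ => ξ (ν * x)) := hξi.comp_mul_left' hν.ne'
    exact (h0.const_mul ν).const_mul (c * η 0) |>.congr
      (by filter_upwards with x; ring)
  refine hg.mono' hmeas.aestronglyMeasurable ?_
  filter_upwards with x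
  have h1 : η (c * (x - d)) ≤ η 0 :=
    evenAntitoneLe η hηe hηm (by simpa using abs_nonneg (c * (x - d)))
  have h2 : 0 ≤ ξ (ν * x) := hξ0 _
  have h3 : 0 ≤ η (c * (x - d)) := hη0 _
  rw [Real.norm_eq_abs, abs_of_nonneg (by positivity)]
  have := mul_le_mul_of_nonneg_right (mul_le_mul_of_nonneg_left h1 hc.le)
    (mul_nonneg hν.le h2)
  linarith

lemma key1 (ξ η : ℝ → ℝ)
    (hξ0 : ∀ x, 0 ≤ ξ x) (hη0 : ∀ x, 0 ≤ η x)
    (hξe : ∀ x, ξ (-x) = ξ x) (hηe : ∀ x, η (-x) = η x)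
    (hξm : AntitoneOn ξ (Set.Ici 0)) (hηm : AntitoneOn η (Set.Ici 0))
    (c ν : ℝ) (hc : 0 < c) (hν : 0 < ν) (d : ℝ) (hd : 0 ≤ d)
    (hf : Integrable (fun x => c * η (c * (x - d)) * (ν * ξ (ν * x))))
    (hI1 : Integrable (fun x => x * (c * η (c * (x - d)) * (ν * ξ (ν * x))))) :
    0 ≤ ∫ x, (d - x) * (c * η (c * (x - d)) * (ν * ξ (ν * x))) := by
  have hdf : Integrable (fun x => (d - x) * (c * η (c * (x - d)) * (ν * ξ (ν * x)))) := by
    refine ((hf.const_mul d).sub hI1).congr ?_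
    filter_upwards with x
    simp only [Pi.sub_apply]; ring
  have hsub := integral_sub_left_eq_self
    (fun x => (d - x) * (c * η (c * (x - d)) * (ν * ξ (ν * x)))) volume d
  rw [← hsub]
  have heq : ∀ x : ℝ, (d - (d - x)) * (c * η (c * ((d - x) - d)) * (ν * ξ (ν * (d - x))))
      = x * (c * η (c * x) * (ν * ξ (ν * (d - x)))) := by
    intro x
    rw [show c * ((d - x) - d) = -(c * x) by ring, hηe]
    ring
  have hφ : Integrable (fun x : ℝ => x * (c * η (c * x) * (ν * ξ (ν * (d - x))))) := by
    refine (hdf.comp_sub_left d).congr ?_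
    filter_upwards with x
    simpa using heq x
  calc (0:ℝ) ≤ ∫ x in Set.Ioi (0:ℝ),
        (x * (c * η (c * x) * (ν * ξ (ν * (d - x))))
          + (-x) * (c * η (c * (-x)) * (ν * ξ (ν * (d - (-x)))))) := by
        refine setIntegral_nonneg measurableSet_Ioi fun x hx => ?_
        have hx0 : 0 < x := hx
        rw [show c * (-x) = -(c * x) by ring, hηe]
        have hξle : ξ (ν * (d - -x)) ≤ ξ (ν * (d - x)) := by
          refine evenAntitoneLe ξ hξe hξm ?_
          rw [abs_mul, abs_mul, abs_of_pos hν]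
          have h1 : |d - x| ≤ d + x := abs_le.mpr ⟨by linarith, by linarith⟩
          have h2 : |d - -x| = d + x := by
            rw [abs_of_nonneg (by linarith)]; ring
          rw [h2]; exact mul_le_mul_of_nonneg_left h1 hν.le
        have h3 : (0:ℝ) ≤ x * (c * η (c * x) * ν) := by
          have := hη0 (c * x); positivity
        nlinarith [mul_le_mul_of_nonneg_left hξle h3]
    _ = _ := by
        rw [← integral_split _ hφ]
        exact integral_congr_ae (by filter_upwards with x using (heq x).symm)

lemma key2 (ξ η : ℝ → ℝ)
    (hξ0 : ∀ x, 0 ≤ ξ x) (hη0 : ∀ x, 0 ≤ η x)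
    (hξe : ∀ x, ξ (-x) = ξ x) (hηe : ∀ x, η (-x) = η x)
    (hξm : AntitoneOn ξ (Set.Ici 0)) (hηm : AntitoneOn η (Set.Ici 0))
    (c ν : ℝ) (hc : 0 < c) (hν : 0 < ν) (d : ℝ) (hd : 0 ≤ d)
    (hf : Integrable (fun x => c * η (c * (x - d)) * (ν * ξ (ν * x))))
    (hI1 : Integrable (fun x => x * (c * η (c * (x - d)) * (ν * ξ (ν * x))))) :
    0 ≤ ∫ x, (d + x) * (c * η (c * (x - d)) * (ν * ξ (ν * x))) := by
  have hψ : Integrable (fun x => (d + x) * (c * η (c * (x - d)) * (ν * ξ (ν * x)))) := by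
    refine ((hf.const_mul d).add hI1).congr ?_
    filter_upwards with x
    simp only [Pi.add_apply]; ring
  rw [integral_split _ hψ]
  refine setIntegral_nonneg measurableSet_Ioi fun x hx => ?_
  have hx0 : 0 < x := hx
  rw [show c * (-x - d) = -(c * (x + d)) by ring, hηe,
    show ν * (-x) = -(ν * x) by ring, hξe]
  have hηle : η (c * (x + d)) ≤ η (c * (x - d)) := by
    refine evenAntitoneLe η hηe hηm ?_
    rw [abs_mul, abs_mul, abs_of_pos hc]
    have h1 : |x - d| ≤ x + d := abs_le.mpr ⟨by linarith, by linarith⟩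
    rw [show |x + d| = x + d from abs_of_nonneg (by linarith)]
    exact mul_le_mul_of_nonneg_left h1 hc.le
  have hA : (0:ℝ) ≤ c * (ν * ξ (ν * x)) := by have := hξ0 (ν * x); positivity
  nlinarith [mul_le_mul_of_nonneg_left hηle hA, mul_nonneg hA (hη0 (c * (x + d))),
    mul_nonneg hA (hη0 (c * (x - d)))]
lemma auxBound (ξ η : ℝ → ℝ)
    (hξ0 : ∀ x, 0 ≤ ξ x) (hη0 : ∀ x, 0 ≤ η x)
    (hξe : ∀ x, ξ (-x) = ξ x) (hηe : ∀ x, η (-x) = η x)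
    (hξm : AntitoneOn ξ (Set.Ici 0)) (hηm : AntitoneOn η (Set.Ici 0))
    (c ν : ℝ) (hc : 0 < c) (hν : 0 < ν) (d : ℝ) (hd : 0 ≤ d)
    (hf : Integrable (fun x => c * η (c * (x - d)) * (ν * ξ (ν * x))))
    (hI1 : Integrable (fun x => x * (c * η (c * (x - d)) * (ν * ξ (ν * x))))) :
    |∫ x, x * (c * η (c * (x - d)) * (ν * ξ (ν * x)))|
      ≤ d * ∫ x, c * η (c * (x - d)) * (ν * ξ (ν * x)) := by
  have e1 : ∫ x, (d - x) * (c * η (c * (x - d)) * (ν * ξ (ν * x)))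
      = d * (∫ x, c * η (c * (x - d)) * (ν * ξ (ν * x)))
        - ∫ x, x * (c * η (c * (x - d)) * (ν * ξ (ν * x))) := by
    rw [← integral_const_mul, ← integral_sub (hf.const_mul d) hI1]
    exact integral_congr_ae (by filter_upwards with x; ring)
  have e2 : ∫ x, (d + x) * (c * η (c * (x - d)) * (ν * ξ (ν * x)))
      = d * (∫ x, c * η (c * (x - d)) * (ν * ξ (ν * x)))
        + ∫ x, x * (c * η (c * (x - d)) * (ν * ξ (ν * x))) := by
    rw [← integral_const_mul, ← integral_add (hf.const_mul d) hI1]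
    exact integral_congr_ae (by filter_upwards with x; ring)
  have k1 := key1 ξ η hξ0 hη0 hξe hηe hξm hηm c ν hc hν d hd hf hI1
  have k2 := key2 ξ η hξ0 hη0 hξe hηe hξm hηm c ν hc hν d hd hf hI1
  rw [e1] at k1; rw [e2] at k2
  rw [abs_le]
  constructor <;> linarith

/-- Lemma 1 of the paper: if ξ and η are even unimodal probability densities and
`I₁(d)` is finite, then `|I₁(d)/I₀(d)| ≤ |d|`. -/
theorem stmt_0 (ξ η : ℝ → ℝ)
    (hξ0 : ∀ x, 0 ≤ ξ x) (hη0 : ∀ x, 0 ≤ η x)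
    (hξ1 : ∫ x, ξ x = 1) (hη1 : ∫ x, η x = 1)
    (hξe : ∀ x, ξ (-x) = ξ x) (hηe : ∀ x, η (-x) = η x)
    (hξm : AntitoneOn ξ (Set.Ici 0)) (hηm : AntitoneOn η (Set.Ici 0))
    (n ν : ℝ) (hn : 0 < n) (hν : 0 < ν) (d : ℝ)
    (hI1 : Integrable (fun x =>
      x * (Real.sqrt n * η (Real.sqrt n * (x - d)) * (ν * ξ (ν * x))))) :
    |(∫ x, x * (Real.sqrt n * η (Real.sqrt n * (x - d)) * (ν * ξ (ν * x)))) /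
      (∫ x, Real.sqrt n * η (Real.sqrt n * (x - d)) * (ν * ξ (ν * x)))| ≤ |d| := by
  set c := Real.sqrt n with hcdef
  have hc : 0 < c := Real.sqrt_pos.mpr hn
  have hξi : Integrable ξ := by
    by_contra h
    rw [integral_undef h] at hξ1
    norm_num at hξ1
  have hf : Integrable (fun x => c * η (c * (x - d)) * (ν * ξ (ν * x))) :=
    fInt ξ η hξ0 hη0 hξe hηe hξm hηm hξi c ν hc hν d
  have hI0 : 0 ≤ ∫ x, c * η (c * (x - d)) * (ν * ξ (ν * x)) := by
    refine integral_nonneg fun x => ?_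
    have := hη0 (c * (x - d)); have := hξ0 (ν * x); positivity
  rcases hI0.eq_or_lt with h | h
  · rw [← h, div_zero, abs_zero]
    exact abs_nonneg d
  · rw [abs_div, abs_of_pos h, div_le_iff₀ h]
    rcases le_or_gt 0 d with hd | hd
    · calc |∫ x, x * (c * η (c * (x - d)) * (ν * ξ (ν * x)))|
          ≤ d * ∫ x, c * η (c * (x - d)) * (ν * ξ (ν * x)) :=
            auxBound ξ η hξ0 hη0 hξe hηe hξm hηm c ν hc hν d hd hf hI1
        _ = |d| * ∫ x, c * η (c * (x - d)) * (ν * ξ (ν * x)) := by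
            rw [abs_of_nonneg hd]
    · -- reflect: use -d ≥ 0
      have hkey : ∀ x : ℝ, c * η (c * (-x - d)) * (ν * ξ (ν * -x))
          = c * η (c * (x - -d)) * (ν * ξ (ν * x)) := by
        intro x
        rw [show c * (-x - d) = -(c * (x - -d)) by ring, hηe,
          show ν * -x = -(ν * x) by ring, hξe]
      have hf' : Integrable (fun x => c * η (c * (x - -d)) * (ν * ξ (ν * x))) :=
        fInt ξ η hξ0 hη0 hξe hηe hξm hηm hξi c ν hc hν (-d)
      have hI1' : Integrable (fun x => x * (c * η (c * (x - -d)) * (ν * ξ (ν * x)))) := by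
        refine (hI1.comp_neg.neg).congr ?_
        filter_upwards with x
        simp only [Pi.neg_apply]
        rw [hkey x]; ring
      have hI0eq : (∫ x, c * η (c * (x - -d)) * (ν * ξ (ν * x)))
          = ∫ x, c * η (c * (x - d)) * (ν * ξ (ν * x)) := by
        rw [← integral_neg_eq_self (fun x => c * η (c * (x - d)) * (ν * ξ (ν * x))) volume]
        exact integral_congr_ae (by filter_upwards with x using (hkey x).symm)
      have hI1eq : (∫ x, x * (c * η (c * (x - -d)) * (ν * ξ (ν * x))))
          = - ∫ x, x * (c * η (c * (x - d)) * (ν * ξ (ν * x))) := by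
        rw [← integral_neg_eq_self
          (fun x => x * (c * η (c * (x - d)) * (ν * ξ (ν * x)))) volume, ← integral_neg]
        refine integral_congr_ae (by filter_upwards with x; rw [← hkey x]; ring)
      have hb := auxBound ξ η hξ0 hη0 hξe hηe hξm hηm c ν hc hν (-d)
        (by linarith) hf' hI1'
      rw [hI0eq, hI1eq, abs_neg] at hb
      calc |∫ x, x * (c * η (c * (x - d)) * (ν * ξ (ν * x)))|
          ≤ -d * ∫ x, c * η (c * (x - d)) * (ν * ξ (ν * x)) := hb
        _ = |d| * ∫ x, c * η (c * (x - d)) * (ν * ξ (ν * x)) := by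
            rw [abs_of_neg hd]
end

section
/- Suppose θ satisfies Σ_{k=0}^{2^j−1} |θ_{jk}|^p ≤ A 2^{−jp(r+1/2−1/p)} for all j, with 1 ≤ p < 2 and r > 1/p. Then for any b > 0, Σ_j Σ_k θ_{jk}² 1{√n |θ_{jk}| ≤ (ln n)^b} ≤ C n^{−2r/(2r+1)} (ln n)^{4br/(2r+1)}. -/
open Real

private lemma tsum_geo_bound17 {g : ℕ → ℝ} {D c : ℝ} (hg0 : ∀ j, 0 ≤ g j)
    (hc0 : 0 ≤ c) (hc1 : c < 1) (hgD : ∀ j, g j ≤ D * c ^ j) :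
    ∑' j, g j ≤ D * (1 - c)⁻¹ := by
  have hsumD : Summable (fun j : ℕ => D * c ^ j) :=
    (summable_geometric_of_lt_one hc0 hc1).mul_left D
  have hsum : Summable g := Summable.of_nonneg_of_le hg0 hgD hsumD
  calc ∑' j, g j ≤ ∑' j : ℕ, D * c ^ j := Summable.tsum_le_tsum hgD hsum hsumD
    _ = D * (1 - c)⁻¹ := by
        rw [tsum_mul_left, tsum_geometric_of_lt_one hc0 hc1]

private lemma tsum_split_bound17 {g : ℕ → ℝ} {H D c : ℝ} (hg0 : ∀ j, 0 ≤ g j)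
    (hc0 : 0 ≤ c) (hc1 : c < 1) (hH : 0 ≤ H)
    (hgH : ∀ j, g j ≤ H * 2 ^ j) (hgD : ∀ j, g j ≤ D * c ^ j) (J : ℕ) :
    ∑' j, g j ≤ H * 2 ^ (J + 1) + D * c ^ (J + 1) * (1 - c)⁻¹ := by
  have hsumD : Summable (fun j : ℕ => D * c ^ j) :=
    (summable_geometric_of_lt_one hc0 hc1).mul_left D
  have hsum : Summable g := Summable.of_nonneg_of_le hg0 hgD hsumD
  rw [← Summable.sum_add_tsum_nat_add (J + 1) hsum]
  have h1 : ∑ i ∈ Finset.range (J + 1), g i ≤ H * 2 ^ (J + 1) := by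
    calc ∑ i ∈ Finset.range (J + 1), g i
        ≤ ∑ i ∈ Finset.range (J + 1), H * 2 ^ i :=
          Finset.sum_le_sum fun i _ => hgH i
      _ = H * ∑ i ∈ Finset.range (J + 1), (2 : ℝ) ^ i := by rw [Finset.mul_sum]
      _ ≤ H * 2 ^ (J + 1) := by
          refine mul_le_mul_of_nonneg_left ?_ hH
          have h := geom_sum_eq (by norm_num : (2 : ℝ) ≠ 1) (J + 1)
          rw [h]
          have : (0:ℝ) < 2 ^ (J+1) := by positivity
          norm_num
  have h2 : ∑' i, g (i + (J + 1)) ≤ D * c ^ (J + 1) * (1 - c)⁻¹ := by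
    refine tsum_geo_bound17 (fun i => hg0 _) hc0 hc1 (fun i => ?_)
    calc g (i + (J + 1)) ≤ D * c ^ (i + (J + 1)) := hgD _
      _ = D * c ^ (J + 1) * c ^ i := by rw [pow_add]; ring
  linarith

set_option maxHeartbeats 1000000 in
/-- Lemma 7, first assertion: under the Besov-type bound with `1 ≤ p < 2`,
`Σ_j Σ_k θ_{jk}² 1{√n |θ_{jk}| ≤ (ln n)^b} ≤ C n^{-2r/(2r+1)} (ln n)^{4br/(2r+1)}`. -/
theorem stmt_17 (p r A b : ℝ) (hp1 : 1 ≤ p) (hp2 : p < 2) (hr : 1 / p < r)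
    (hA : 0 < A) (hb : 0 < b)
    (θ : ℕ → ℕ → ℝ)
    (hθ : ∀ j : ℕ, ∑ k ∈ Finset.range (2 ^ j), |θ j k| ^ p ≤
      A * (2 : ℝ) ^ (-(j : ℝ) * p * (r + 1 / 2 - 1 / p))) :
    ∃ C : ℝ, 0 < C ∧ ∀ n : ℕ, 2 ≤ n →
      ∑' j : ℕ, ∑ k ∈ Finset.range (2 ^ j),
          (if Real.sqrt n * |θ j k| ≤ (Real.log n) ^ b then (θ j k) ^ 2 else 0)
        ≤ C * (n : ℝ) ^ (-(2 * r) / (2 * r + 1)) *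
            (Real.log n) ^ (4 * b * r / (2 * r + 1)) := by
  have hp0 : (0 : ℝ) < p := lt_of_lt_of_le one_pos hp1
  have hpr : 1 < p * r := by
    have h := (div_lt_iff₀ hp0).mp hr
    nlinarith
  have hr0 : 0 < r := lt_trans (by positivity) hr
  set a : ℝ := p * (r + 1 / 2 - 1 / p) with ha_def
  have ha_eq : a = p * r + p / 2 - 1 := by
    rw [ha_def]; field_simp
  have ha : 0 < a := by rw [ha_eq]; nlinarith
  have h2r : 1 < 2 * r := by nlinarith [mul_pos hr0 (by linarith : (0:ℝ) < 2 - p)]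
  have h2r1 : (0 : ℝ) < 2 * r + 1 := by linarith
  set c : ℝ := (2 : ℝ) ^ (-a) with hc_def
  have hc0 : 0 < c := rpow_pos_of_pos two_pos _
  have hc1 : c < 1 := rpow_lt_one_of_one_lt_of_neg one_lt_two (neg_neg_of_pos ha)
  have hc1' : (0 : ℝ) < 1 - c := by linarith
  refine ⟨2 + A * (1 - c)⁻¹, by positivity, fun n hn => ?_⟩
  have hn1 : (1 : ℝ) < n := by exact_mod_cast lt_of_lt_of_le one_lt_two hn
  have hn0 : (0 : ℝ) < n := by linarith
  have hln : 0 < Real.log n := Real.log_pos hn1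
  set M : ℝ := n * Real.log n ^ (-(2 * b)) with hM_def
  have hM0 : 0 < M := mul_pos hn0 (rpow_pos_of_pos hln _)
  set g : ℕ → ℝ := fun j => ∑ k ∈ Finset.range (2 ^ j),
      (if Real.sqrt n * |θ j k| ≤ (Real.log n) ^ b then (θ j k) ^ 2 else 0) with hg_def
  have hg0 : ∀ j, 0 ≤ g j := by
    intro j
    refine Finset.sum_nonneg fun k _ => ?_
    split <;> positivity
  -- the head bound
  have hMinv : M ^ (-1 : ℝ) = (Real.log n ^ b) ^ 2 / n := by
    have h1 : ((Real.log n : ℝ) ^ b) ^ 2 = Real.log n ^ (2 * b) := by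
      rw [← Real.rpow_natCast (Real.log n ^ b) 2, ← Real.rpow_mul hln.le]
      norm_num [mul_comm]
    rw [hM_def, Real.rpow_neg_one, mul_inv, Real.rpow_neg hln.le, inv_inv, h1]
    ring
  have hgH : ∀ j, g j ≤ M ^ (-1 : ℝ) * 2 ^ j := by
    intro j
    have hterm : ∀ k ∈ Finset.range (2 ^ j),
        (if Real.sqrt n * |θ j k| ≤ (Real.log n) ^ b then (θ j k) ^ 2 else 0)
          ≤ M ^ (-1 : ℝ) := by
      intro k _
      split
      · rename_i hcond
        rw [hMinv, le_div_iff₀ hn0]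
        have h1 : (Real.sqrt n * |θ j k|) ^ 2 ≤ (Real.log n ^ b) ^ 2 :=
          pow_le_pow_left₀ (by positivity) hcond 2
        have h2 : (Real.sqrt n * |θ j k|) ^ 2 = n * θ j k ^ 2 := by
          rw [mul_pow, Real.sq_sqrt hn0.le, sq_abs]
        linarith
      · positivity
    calc g j ≤ ∑ _k ∈ Finset.range (2 ^ j), M ^ (-1 : ℝ) :=
          Finset.sum_le_sum hterm
      _ = M ^ (-1 : ℝ) * 2 ^ j := by
          rw [Finset.sum_const, Finset.card_range, nsmul_eq_mul]
          push_cast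
          try ring
  -- the tail bound
  have hs : (Real.log n) ^ b / Real.sqrt n = M ^ (-(1 / 2) : ℝ) := by
    rw [hM_def, Real.mul_rpow hn0.le (rpow_pos_of_pos hln _).le,
      ← Real.rpow_mul hln.le,
      show (-(2 * b)) * (-(1 / 2) : ℝ) = b by ring,
      Real.sqrt_eq_rpow, div_eq_mul_inv, ← Real.rpow_neg hn0.le]
    rw [show (-(1 / 2) : ℝ) = -(1 / 2 : ℝ) by norm_num]
    ring
  have hgD : ∀ j, g j ≤ (A * M ^ ((p - 2) / 2)) * c ^ j := by
    intro j
    have key : ∀ x : ℝ, Real.sqrt n * |x| ≤ (Real.log n) ^ b →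
        x ^ 2 ≤ M ^ ((p - 2) / 2 - 0) * |x| ^ p → True := fun _ _ _ => trivial
    have hterm : ∀ k ∈ Finset.range (2 ^ j),
        (if Real.sqrt n * |θ j k| ≤ (Real.log n) ^ b then (θ j k) ^ 2 else 0)
          ≤ M ^ ((p - 2) / 2) * |θ j k| ^ p := by
      intro k _
      have hMp : (0:ℝ) < M ^ ((p - 2) / 2) := rpow_pos_of_pos hM0 _
      split
      · rename_i hcond
        set x := θ j k with hx_def
        have hxle : |x| ≤ M ^ (-(1 / 2) : ℝ) := by
          rw [← hs, le_div_iff₀ (Real.sqrt_pos.mpr hn0)]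
          linarith [hcond, mul_comm (Real.sqrt n) |x|]
        rcases eq_or_ne x 0 with hx0 | hx0
        · rw [hx0]
          simp [Real.zero_rpow (ne_of_gt hp0)]
        · have hxpos : 0 < |x| := abs_pos.mpr hx0
          have hx2 : x ^ 2 = |x| ^ ((2 : ℝ)) := by
            rw [Real.rpow_two, sq_abs]
          have hsplit : |x| ^ ((2:ℝ)) = |x| ^ (2 - p) * |x| ^ p := by
            rw [← Real.rpow_add hxpos]
            norm_num
          rw [hx2, hsplit]
          refine mul_le_mul_of_nonneg_right ?_ (rpow_nonneg (abs_nonneg _) _)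
          calc |x| ^ (2 - p) ≤ (M ^ (-(1 / 2) : ℝ)) ^ (2 - p) :=
                Real.rpow_le_rpow (abs_nonneg _) hxle (by linarith)
            _ = M ^ ((p - 2) / 2) := by
                rw [← Real.rpow_mul hM0.le]
                congr 1
                ring
      · positivity
    have hcj : A * (2 : ℝ) ^ (-(j : ℝ) * p * (r + 1 / 2 - 1 / p)) = A * c ^ j := by
      rw [hc_def, show -(j : ℝ) * p * (r + 1 / 2 - 1 / p) = (-a) * (j : ℝ) by
        rw [ha_def]; ring]
      rw [Real.rpow_mul (by norm_num : (0:ℝ) ≤ 2), Real.rpow_natCast]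
    calc g j ≤ ∑ k ∈ Finset.range (2 ^ j), M ^ ((p - 2) / 2) * |θ j k| ^ p :=
          Finset.sum_le_sum hterm
      _ = M ^ ((p - 2) / 2) * ∑ k ∈ Finset.range (2 ^ j), |θ j k| ^ p := by
          rw [Finset.mul_sum]
      _ ≤ M ^ ((p - 2) / 2) * (A * c ^ j) := by
          rw [← hcj]
          exact mul_le_mul_of_nonneg_left (hθ j) (rpow_pos_of_pos hM0 _).le
      _ = (A * M ^ ((p - 2) / 2)) * c ^ j := by ring
  -- reduce RHS to M
  have eRHS : (2 + A * (1 - c)⁻¹) * (n : ℝ) ^ (-(2 * r) / (2 * r + 1)) *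
      (Real.log n) ^ (4 * b * r / (2 * r + 1))
      = (2 + A * (1 - c)⁻¹) * M ^ (-(2 * r) / (2 * r + 1)) := by
    rw [hM_def, Real.mul_rpow hn0.le (rpow_pos_of_pos hln _).le,
      ← Real.rpow_mul hln.le,
      show (-(2 * b)) * (-(2 * r) / (2 * r + 1)) = 4 * b * r / (2 * r + 1) by
        field_simp; ring]
    ring
  rw [show (∑' j : ℕ, ∑ k ∈ Finset.range (2 ^ j),
      (if Real.sqrt n * |θ j k| ≤ (Real.log n) ^ b then (θ j k) ^ 2 else 0)) = ∑' j, g j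
      from rfl, eRHS]
  have hAM : 0 ≤ A * M ^ ((p - 2) / 2) := by positivity
  rcases le_or_gt 1 M with h1M | h1M
  · -- M ≥ 1 : split the sum
    set t : ℝ := M ^ (1 / (2 * r + 1)) with ht_def
    have ht1 : 1 ≤ t := Real.one_le_rpow h1M (by positivity)
    have ht0 : 0 < t := lt_of_lt_of_le one_pos ht1
    set J : ℕ := ⌊Real.logb 2 t⌋₊ with hJ_def
    have hJ1 : (2 : ℝ) ^ J ≤ t := by
      have h := Nat.floor_le (Real.logb_nonneg one_lt_two ht1)
      calc (2 : ℝ) ^ J = (2 : ℝ) ^ ((J : ℝ)) := (Real.rpow_natCast 2 J).symm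
        _ ≤ (2:ℝ) ^ Real.logb 2 t := Real.rpow_le_rpow_of_exponent_le one_le_two h
        _ = t := Real.rpow_logb two_pos (by norm_num) ht0
    have hJ2 : t ≤ (2 : ℝ) ^ (J + 1) := by
      have h := (Nat.lt_floor_add_one (Real.logb 2 t)).le
      calc t = (2:ℝ) ^ Real.logb 2 t := (Real.rpow_logb two_pos (by norm_num) ht0).symm
        _ ≤ (2:ℝ) ^ ((J : ℝ) + 1) := Real.rpow_le_rpow_of_exponent_le one_le_two h
        _ = (2:ℝ) ^ ((J + 1 : ℕ)) := by
            rw [show ((J : ℝ) + 1) = (((J + 1 : ℕ) : ℝ)) by push_cast; ring,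
              Real.rpow_natCast]
    have hmain := tsum_split_bound17 hg0 hc0.le hc1 (rpow_pos_of_pos hM0 _).le hgH hgD J
    have hcJ : c ^ (J + 1) ≤ t ^ (-a) := by
      have h1 : c ^ (J + 1) = ((2 : ℝ) ^ (J + 1) : ℝ) ^ (-a) := by
        rw [hc_def, ← Real.rpow_natCast ((2:ℝ) ^ (-a)) (J + 1),
          ← Real.rpow_mul (by norm_num : (0:ℝ) ≤ 2),
          show (-a) * ((J + 1 : ℕ) : ℝ) = ((J + 1 : ℕ) : ℝ) * (-a) by ring,
          Real.rpow_mul (by norm_num : (0:ℝ) ≤ 2), Real.rpow_natCast]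
      rw [h1]
      exact Real.rpow_le_rpow_of_nonpos ht0 hJ2 (neg_nonpos.mpr ha.le)
    have e1 : M ^ (-1 : ℝ) * t = M ^ (-(2 * r) / (2 * r + 1)) := by
      rw [ht_def, ← Real.rpow_add hM0]
      congr 1
      field_simp
      try ring
    have e2 : M ^ ((p - 2) / 2) * t ^ (-a) = M ^ (-(2 * r) / (2 * r + 1)) := by
      rw [ht_def, ← Real.rpow_mul hM0.le, ← Real.rpow_add hM0]
      congr 1
      rw [ha_eq]
      field_simp
      try ring
    have hH2 : M ^ (-1 : ℝ) * 2 ^ (J + 1) ≤ 2 * M ^ (-(2 * r) / (2 * r + 1)) := by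
      rw [← e1]
      calc M ^ (-1 : ℝ) * 2 ^ (J + 1) = M ^ (-1:ℝ) * (2 * 2 ^ J) := by ring
        _ ≤ M ^ (-1:ℝ) * (2 * t) :=
            mul_le_mul_of_nonneg_left (by linarith) (rpow_pos_of_pos hM0 _).le
        _ = 2 * (M ^ (-1:ℝ) * t) := by ring
    have hD2 : A * M ^ ((p - 2) / 2) * c ^ (J + 1) * (1 - c)⁻¹
        ≤ A * (1 - c)⁻¹ * M ^ (-(2 * r) / (2 * r + 1)) := by
      rw [← e2]
      have h := mul_le_mul_of_nonneg_left hcJ hAM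
      have h' := mul_le_mul_of_nonneg_right h (inv_nonneg.mpr hc1'.le)
      calc A * M ^ ((p - 2) / 2) * c ^ (J + 1) * (1 - c)⁻¹
          ≤ A * M ^ ((p - 2) / 2) * t ^ (-a) * (1 - c)⁻¹ := by
            nlinarith [rpow_nonneg (le_of_lt ht0) (-a)]
        _ = A * (1 - c)⁻¹ * (M ^ ((p - 2) / 2) * t ^ (-a)) := by ring
    calc ∑' j, g j ≤ M ^ (-1 : ℝ) * 2 ^ (J + 1)
          + A * M ^ ((p - 2) / 2) * c ^ (J + 1) * (1 - c)⁻¹ := hmain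
      _ ≤ 2 * M ^ (-(2 * r) / (2 * r + 1))
          + A * (1 - c)⁻¹ * M ^ (-(2 * r) / (2 * r + 1)) := add_le_add hH2 hD2
      _ = (2 + A * (1 - c)⁻¹) * M ^ (-(2 * r) / (2 * r + 1)) := by ring
  · -- M < 1 : use only the tail bound
    have hmain := tsum_geo_bound17 hg0 hc0.le hc1 hgD
    have hle : M ^ ((p - 2) / 2) ≤ M ^ (-(2 * r) / (2 * r + 1)) := by
      refine Real.rpow_le_rpow_of_exponent_ge hM0 h1M.le ?_
      have hq : (1:ℝ)/2 ≤ 2 * r / (2 * r + 1) := by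
        rw [div_le_div_iff₀ (by norm_num) h2r1]
        linarith
      rw [neg_div]
      linarith
    have hMpos : (0:ℝ) < M ^ (-(2 * r) / (2 * r + 1)) := rpow_pos_of_pos hM0 _
    calc ∑' j, g j ≤ A * M ^ ((p - 2) / 2) * (1 - c)⁻¹ := hmain
      _ ≤ A * M ^ (-(2 * r) / (2 * r + 1)) * (1 - c)⁻¹ := by
          have := mul_le_mul_of_nonneg_left hle hA.le
          nlinarith [inv_nonneg.mpr hc1'.le]
      _ ≤ (2 + A * (1 - c)⁻¹) * M ^ (-(2 * r) / (2 * r + 1)) := by nlinarith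
end
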